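/- arXiv:1703.06728 — 6 statements merged into one kernel-verified Lean document; each statement's English description precedes it below -/
import Mathlib

section
/- Let n ≥ 1 and let Q be an n×n complex matrix that is Hermitian and positive semidefinite. Then the n-th root of the determinant of Q equals the infimum of the set of traces: (Re(det Q))^{1/n} = inf { (1/n)·Re(tr(H·Q)) : H ∈ ℋ }, where the infimum is taken over all H ∈ ℋ. -/
open Matrix ComplexOrder

set_option maxHeartbeats 1000000

private lemma posDef_conj_unitary {n : ℕ} {A B : Matrix (Fin n) (Fin n) ℂ}
    (hA : A.PosDef) (hB : IsUnit B) : (B * A * Bᴴ).PosDef := by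
  exact hA.mul_mul_conjTranspose_same (Matrix.vecMul_injective_of_isUnit hB)

/-- trace of a psd matrix in terms of eigenvalues -/
private lemma trace_re_eq {n : ℕ} {M : Matrix (Fin n) (Fin n) ℂ} (hM : M.IsHermitian) :
    M.trace.re = ∑ i, hM.eigenvalues i := by
  conv_lhs => rw [hM.spectral_theorem]
  rw [Unitary.conjStarAlgAut_apply, Matrix.trace_mul_cycle, Matrix.mem_unitaryGroup_iff'.mp hM.eigenvectorUnitary.2, one_mul,
    Matrix.trace_diagonal]
  simp [Complex.re_sum]

private lemma det_re_eq {n : ℕ} {M : Matrix (Fin n) (Fin n) ℂ} (hM : M.IsHermitian) :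
    M.det.re = ∏ i, hM.eigenvalues i := by
  rw [hM.det_eq_prod_eigenvalues]
  norm_cast

/-- AM-GM for positive semidefinite matrices -/
private lemma amgm_psd {n : ℕ} (hn : 1 ≤ n) {M : Matrix (Fin n) (Fin n) ℂ}
    (hM : M.PosSemidef) :
    M.det.re ^ ((1 : ℝ) / n) ≤ (1 / (n : ℝ)) * M.trace.re := by
  have hn0 : (n : ℝ) ≠ 0 := Nat.cast_ne_zero.mpr (by omega)
  have hlm : ∀ i, 0 ≤ hM.1.eigenvalues i := hM.eigenvalues_nonneg
  rw [det_re_eq hM.1, trace_re_eq hM.1]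
  have key := Real.geom_mean_le_arith_mean_weighted Finset.univ (fun _ => 1 / (n : ℝ))
    hM.1.eigenvalues (fun i _ => by positivity)
    (by rw [Finset.sum_const, Finset.card_univ, Fintype.card_fin, nsmul_eq_mul]; field_simp) (fun i _ => hlm i)
  calc (∏ i, hM.1.eigenvalues i) ^ ((1:ℝ)/n)
      = ∏ i, hM.1.eigenvalues i ^ ((1:ℝ)/n) := by
        rw [← Real.finset_prod_rpow _ _ (fun i _ => hlm i)]
    _ ≤ ∑ i, (1/(n:ℝ)) * hM.1.eigenvalues i := key
    _ = (1/(n:ℝ)) * ∑ i, hM.1.eigenvalues i := by rw [Finset.mul_sum]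

open scoped MatrixOrder in
/-- every element of the trace set dominates det^(1/n) -/
private lemma lower_bound {n : ℕ} (hn : 1 ≤ n) {Q : Matrix (Fin n) (Fin n) ℂ}
    (hQ : Q.PosSemidef) {H : Matrix (Fin n) (Fin n) ℂ} (hH : H.PosDef) (hdet : H.det = 1) :
    Q.det.re ^ ((1 : ℝ) / n) ≤ (1 / (n : ℝ)) * ((H * Q).trace).re := by
  set R := CFC.sqrt H with hRdef
  have hR : R.PosSemidef := (CFC.sqrt_nonneg H).posSemidef
  have hRR : R * R = H := CFC.sqrt_mul_sqrt_self H hH.posSemidef.nonneg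
  have hM : (R * Q * R).PosSemidef := by
    have := hQ.mul_mul_conjTranspose_same R
    rwa [hR.1.eq] at this
  have hdetM : (R * Q * R).det = Q.det := by
    rw [Matrix.det_mul, Matrix.det_mul]
    have : R.det * R.det = H.det := by rw [← Matrix.det_mul, hRR]
    rw [mul_comm R.det Q.det, mul_assoc, this, hdet, mul_one]
  have htrM : (R * Q * R).trace = (H * Q).trace := by
    rw [Matrix.trace_mul_cycle, hRR]
  have := amgm_psd hn hM
  rwa [hdetM, htrM] at this

/-- construction of elements of the trace set from positive weights with product one -/
private lemma mem_traces {n : ℕ} {Q : Matrix (Fin n) (Fin n) ℂ} (hQ : Q.PosSemidef)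
    (e : Fin n → ℝ) (he : ∀ i, 0 < e i) (hprod : ∏ i, e i = 1) :
    ∃ H : Matrix (Fin n) (Fin n) ℂ, H.PosDef ∧ H.det = 1 ∧
      ((H * Q).trace).re = ∑ i, e i * hQ.1.eigenvalues i := by
  classical
  set U : Matrix (Fin n) (Fin n) ℂ := (hQ.1.eigenvectorUnitary : Matrix (Fin n) (Fin n) ℂ) with hUdef
  have hU1 : U * star U = 1 := Matrix.mem_unitaryGroup_iff.mp hQ.1.eigenvectorUnitary.2
  have hU1' : star U * U = 1 := Matrix.mem_unitaryGroup_iff'.mp hQ.1.eigenvectorUnitary.2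
  have hUunit : IsUnit U := ⟨⟨U, star U, hU1, hU1'⟩, rfl⟩
  set D : Matrix (Fin n) (Fin n) ℂ := Matrix.diagonal (fun i => (e i : ℂ)) with hDdef
  refine ⟨U * D * star U, ?_, ?_, ?_⟩
  · have hD : D.PosDef := Matrix.PosDef.diagonal (fun i => Complex.zero_lt_real.mpr (he i))
    exact posDef_conj_unitary hD hUunit
  · rw [Matrix.det_mul, Matrix.det_mul, mul_comm U.det D.det, mul_assoc, ← Matrix.det_mul, hU1,
      Matrix.det_one, mul_one, hDdef, Matrix.det_diagonal, ← Complex.ofReal_prod, hprod,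
      Complex.ofReal_one]
  · have hQeq : Q = U * Matrix.diagonal (RCLike.ofReal ∘ hQ.1.eigenvalues) * star U :=
      hQ.1.spectral_theorem
    conv_lhs => rw [hQeq]
    have : U * D * star U * (U * Matrix.diagonal (RCLike.ofReal ∘ hQ.1.eigenvalues) * star U)
        = U * (D * Matrix.diagonal (RCLike.ofReal ∘ hQ.1.eigenvalues)) * star U := by
      simp only [Matrix.mul_assoc]
      rw [← Matrix.mul_assoc (star U) U, hU1', one_mul]
    rw [this, Matrix.trace_mul_cycle, hU1', one_mul, hDdef, Matrix.diagonal_mul_diagonal,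
      Matrix.trace_diagonal]
    simp [Complex.re_sum]

/-- Lemma 3.1: for a Hermitian positive semidefinite matrix `Q`,
`(det Q)^{1/n}` is the infimum of the normalized traces `(1/n)·Re(tr(H·Q))`
over all Hermitian positive definite matrices `H` with `det H = 1`. -/
theorem det_rpow_eq_sInf_normalized_traces (n : ℕ) (hn : 1 ≤ n)
    (Q : Matrix (Fin n) (Fin n) ℂ) (hQ : Q.PosSemidef) :
    Q.det.re ^ ((1 : ℝ) / n) =
      sInf {x : ℝ | ∃ H : Matrix (Fin n) (Fin n) ℂ,
        H.PosDef ∧ H.det = 1 ∧ x = (1 / (n : ℝ)) * ((H * Q).trace).re} := by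
  classical
  have hn0 : (n : ℝ) ≠ 0 := Nat.cast_ne_zero.mpr (by omega)
  set S := {x : ℝ | ∃ H : Matrix (Fin n) (Fin n) ℂ,
      H.PosDef ∧ H.det = 1 ∧ x = (1 / (n : ℝ)) * ((H * Q).trace).re} with hSdef
  have hSne : S.Nonempty := ⟨(1 / (n : ℝ)) * (((1 : Matrix (Fin n) (Fin n) ℂ) * Q).trace).re,
    1, Matrix.PosDef.one, Matrix.det_one, rfl⟩
  have hlb : ∀ x ∈ S, Q.det.re ^ ((1 : ℝ) / n) ≤ x := by
    rintro x ⟨H, hH, hdet, rfl⟩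
    exact lower_bound hn hQ hH hdet
  have hbdd : BddBelow S := ⟨Q.det.re ^ ((1 : ℝ) / n), hlb⟩
  refine le_antisymm (le_csInf hSne hlb) ?_
  set lam := hQ.1.eigenvalues with hlam
  have hlm : ∀ i, 0 ≤ lam i := hQ.eigenvalues_nonneg
  have hdet : Q.det.re = ∏ i, lam i := det_re_eq hQ.1
  by_cases h0 : Q.det.re = 0
  · -- degenerate case
    rw [h0, Real.zero_rpow (by positivity)]
    obtain ⟨j, _, hj⟩ : ∃ j ∈ Finset.univ, lam j = 0 := by
      by_contra hcon
      push_neg at hcon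
      exact (Finset.prod_ne_zero_iff.mpr (fun i hi => hcon i hi)) (hdet ▸ h0)
    refine le_of_forall_pos_le_add (fun ε hε => ?_)
    rw [zero_add]
    -- choose t
    set Ssum : ℝ := ∑ i, lam i with hSs
    have hSs0 : 0 ≤ Ssum := Finset.sum_nonneg (fun i _ => hlm i)
    set t : ℝ := min ((n : ℝ) * ε / (Ssum + 1)) 1 with ht
    have ht0 : 0 < t := lt_min (by positivity) one_pos
    set e : Fin n → ℝ := fun i => if i = j then (t ^ (n - 1))⁻¹ else t with he
    have hepos : ∀ i, 0 < e i := fun i => by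
      by_cases h : i = j <;> simp [he, h, ht0, inv_pos, pow_pos ht0]
    have hcard : (Finset.univ.erase j).card = n - 1 := by
      rw [Finset.card_erase_of_mem (Finset.mem_univ j), Finset.card_univ, Fintype.card_fin]
    have heprod : ∏ i, e i = 1 := by
      rw [← Finset.prod_erase_mul _ _ (Finset.mem_univ j)]
      have h1 : ∀ i ∈ Finset.univ.erase j, e i = t :=
        fun i hi => if_neg (Finset.ne_of_mem_erase hi)
      have h2 : e j = (t ^ (n - 1))⁻¹ := if_pos rfl
      rw [Finset.prod_congr rfl h1, Finset.prod_const, hcard, h2,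
        mul_inv_cancel₀ (pow_ne_zero _ ht0.ne')]
    obtain ⟨H, hH, hHdet, hHtr⟩ := mem_traces hQ e hepos heprod
    have hsum : ∑ i, e i * lam i = t * Ssum := by
      rw [hSs, Finset.mul_sum]
      refine Finset.sum_congr rfl (fun i _ => ?_)
      by_cases h : i = j
      · simp [he, h, hj]
      · simp [he, h]
    have hval : (1 / (n : ℝ)) * ((H * Q).trace).re = (1 / (n : ℝ)) * (t * Ssum) := by
      rw [hHtr, hsum]
    refine csInf_le_of_le hbdd ⟨H, hH, hHdet, rfl⟩ ?_
    rw [hval]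
    have h1 : t ≤ (n : ℝ) * ε / (Ssum + 1) := min_le_left _ _
    have h2 : t * Ssum ≤ (n : ℝ) * ε := by
      calc t * Ssum ≤ ((n : ℝ) * ε / (Ssum + 1)) * Ssum := by
            exact mul_le_mul_of_nonneg_right h1 hSs0
        _ ≤ (n : ℝ) * ε := by
            rw [div_mul_eq_mul_div, div_le_iff₀ (by positivity)]
            have : Ssum ≤ Ssum + 1 := by linarith
            calc (n : ℝ) * ε * Ssum ≤ (n : ℝ) * ε * (Ssum + 1) := by
                  exact mul_le_mul_of_nonneg_left this (by positivity)
              _ = (n : ℝ) * ε * (Ssum + 1) := rfl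
    calc (1 / (n : ℝ)) * (t * Ssum) ≤ (1 / (n : ℝ)) * ((n : ℝ) * ε) := by
          exact mul_le_mul_of_nonneg_left h2 (by positivity)
      _ = ε := by field_simp
  · -- positive definite case
    have hdpos : 0 < Q.det.re :=
      lt_of_le_of_ne (hdet ▸ Finset.prod_nonneg (fun i _ => hlm i)) (Ne.symm h0)
    have hlmpos : ∀ i, 0 < lam i := by
      intro i
      rcases (hlm i).lt_or_eq with h | h
      · exact h
      · exfalso
        apply h0
        rw [hdet]
        exact Finset.prod_eq_zero (Finset.mem_univ i) h.symm
    set c : ℝ := Q.det.re ^ ((1 : ℝ) / n) with hc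
    have hcpos : 0 < c := Real.rpow_pos_of_pos hdpos _
    have hcn : c ^ n = Q.det.re := by
      rw [hc, ← Real.rpow_natCast (Q.det.re ^ ((1:ℝ)/n)) n, ← Real.rpow_mul hdpos.le]
      rw [one_div_mul_cancel hn0, Real.rpow_one]
    set e : Fin n → ℝ := fun i => c / lam i with he
    have hepos : ∀ i, 0 < e i := fun i => div_pos hcpos (hlmpos i)
    have heprod : ∏ i, e i = 1 := by
      rw [he]
      simp only
      rw [Finset.prod_div_distrib, Finset.prod_const, Finset.card_univ, Fintype.card_fin,
        hcn, hdet, div_self (hdet ▸ h0)]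
    obtain ⟨H, hH, hHdet, hHtr⟩ := mem_traces hQ e hepos heprod
    refine csInf_le_of_le hbdd ⟨H, hH, hHdet, rfl⟩ ?_
    rw [hHtr]
    have : ∑ i, e i * lam i = (n : ℝ) * c := by
      have : ∀ i, e i * lam i = c := fun i => div_mul_cancel₀ c (hlmpos i).ne'
      rw [Finset.sum_congr rfl (fun i _ => this i), Finset.sum_const, Finset.card_univ,
        Fintype.card_fin, nsmul_eq_mul]
    rw [this]
    field_simp
    exact le_rfl
end

section
/- Let n ≥ 1, let H be an n×n complex Hermitian positive definite matrix and let Q be an n×n complex Hermitian positive semidefinite matrix. Then (1/n)·Re(tr(H·Q)) ≥ (Re(det H))^{1/n} · (Re(det Q))^{1/n}. -/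
open Matrix ComplexOrder
open scoped MatrixOrder

theorem trace_eq_sum_eig' {m : Type*} [Fintype m] [DecidableEq m]
    {A : Matrix m m ℂ} (hA : A.IsHermitian) :
    A.trace = ∑ i, (hA.eigenvalues i : ℂ) := by
  conv_lhs => rw [hA.spectral_theorem]
  rw [Unitary.conjStarAlgAut_apply, trace_mul_cycle, (Matrix.mem_unitaryGroup_iff').mp (hA.eigenvectorUnitary).2, one_mul,
    trace_diagonal]
  rfl


/-- The lower-bound half of Lemma 3.1: for `H` Hermitian positive definite and
`Q` Hermitian positive semidefinite,
`(1/n)·Re(tr(H·Q)) ≥ (Re det H)^{1/n} · (Re det Q)^{1/n}`. -/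
theorem normalized_trace_ge_det_rpow_mul_det_rpow (n : ℕ) (hn : 1 ≤ n)
    (H Q : Matrix (Fin n) (Fin n) ℂ) (hH : H.PosDef) (hQ : Q.PosSemidef) :
    (1 / (n : ℝ)) * ((H * Q).trace).re ≥
      H.det.re ^ ((1 : ℝ) / n) * Q.det.re ^ ((1 : ℝ) / n) := by
  have hn0 : (n : ℝ) ≠ 0 := Nat.cast_ne_zero.mpr (by omega)
  set S := CFC.sqrt H with hS
  have hSh : S.IsHermitian := (Matrix.nonneg_iff_posSemidef.mp (CFC.sqrt_nonneg H)).isHermitian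
  have hSS : S * S = H := CFC.sqrt_mul_sqrt_self H hH.posSemidef.nonneg
  set M := S * Q * S with hMdef
  have hM : M.PosSemidef := by
    have := hQ.mul_mul_conjTranspose_same S
    rwa [hSh.eq] at this
  -- trace
  have htr : (H * Q).trace = M.trace := by
    rw [hMdef, trace_mul_cycle, hSS]
  -- det
  have hdet : M.det = H.det * Q.det := by
    rw [hMdef, det_mul, det_mul, ← hSS, det_mul]; ring
  -- real expressions via eigenvalues
  have hHdet : H.det = ((∏ i, hH.1.eigenvalues i : ℝ) : ℂ) := by
    rw [hH.1.det_eq_prod_eigenvalues]; push_cast; rfl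
  have hQdet : Q.det = ((∏ i, hQ.1.eigenvalues i : ℝ) : ℂ) := by
    rw [hQ.1.det_eq_prod_eigenvalues]; push_cast; rfl
  have hMtr : M.trace = ((∑ i, hM.1.eigenvalues i : ℝ) : ℂ) := by
    rw [trace_eq_sum_eig' hM.1]; push_cast; rfl
  have hMdet2 : M.det = ((∏ i, hM.1.eigenvalues i : ℝ) : ℂ) := by
    rw [hM.1.det_eq_prod_eigenvalues]; push_cast; rfl
  have hprod : ∏ i, hM.1.eigenvalues i =
      (∏ i, hH.1.eigenvalues i) * (∏ i, hQ.1.eigenvalues i) := by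
    have := hdet
    rw [hMdet2, hHdet, hQdet, ← Complex.ofReal_mul] at this
    exact_mod_cast this
  rw [htr, hMtr, hHdet, hQdet]
  simp only [Complex.ofReal_re]
  have hμ : ∀ i, 0 ≤ hM.1.eigenvalues i := hM.eigenvalues_nonneg
  have key : ∏ i, (hM.1.eigenvalues i) ^ ((1:ℝ)/n) ≤
      ∑ i : Fin n, (1/(n:ℝ)) * hM.1.eigenvalues i := by
    apply Real.geom_mean_le_arith_mean_weighted
    · intro i _; positivity
    · simp [Finset.sum_const, mul_comm, hn0]
    · intro i _; exact hμ i
  rw [ge_iff_le, ← Real.mul_rpow (Finset.prod_nonneg fun i _ => (hH.eigenvalues_pos i).le)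
    (Finset.prod_nonneg fun i _ => hQ.eigenvalues_nonneg i), ← hprod,
    ← Real.finset_prod_rpow _ _ (fun i _ => hμ i), Finset.mul_sum]
  exact key
end

section
/- Let n ≥ 1 and let Q be an n×n complex Hermitian positive semidefinite matrix with det Q = 0. Then for every real ε > 0 there exists H ∈ ℋ such that (1/n)·Re(tr(H·Q)) < ε. -/
open Matrix ComplexOrder

/-- The degenerate case of Lemma 3.1: if `Q` is Hermitian positive semidefinite
with `det Q = 0`, then the normalized traces `(1/n)·Re(tr(H·Q))`, over Hermitian
positive definite `H` with `det H = 1`, get arbitrarily close to `0`. -/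
theorem exists_normalized_trace_lt_of_det_eq_zero (n : ℕ) (hn : 1 ≤ n)
    (Q : Matrix (Fin n) (Fin n) ℂ) (hQ : Q.PosSemidef) (hdet : Q.det = 0) :
    ∀ ε : ℝ, 0 < ε → ∃ H : Matrix (Fin n) (Fin n) ℂ,
      H.PosDef ∧ H.det = 1 ∧ (1 / (n : ℝ)) * ((H * Q).trace).re < ε := by
  intro ε hε
  have hH := hQ.1
  set μ : Fin n → ℝ := hH.eigenvalues with hμ
  have hμ0 : ∀ i, 0 ≤ μ i := hQ.eigenvalues_nonneg
  -- find a zero eigenvalue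
  have hprod : (∏ i, (μ i : ℂ)) = 0 := by
    have h := hH.det_eq_prod_eigenvalues
    rw [hdet] at h
    rw [hμ]
    simpa using h.symm
  obtain ⟨i0, -, hi0⟩ := Finset.prod_eq_zero_iff.mp hprod
  have hi0' : μ i0 = 0 := by exact_mod_cast hi0
  set S : ℝ := ∑ i ∈ Finset.univ.erase i0, μ i with hS
  have hS0 : 0 ≤ S := Finset.sum_nonneg fun i _ => hμ0 i
  set δ : ℝ := ε * n / (2 * (S + 1)) with hδ
  have hnpos : (0 : ℝ) < n := by exact_mod_cast Nat.lt_of_lt_of_le Nat.zero_lt_one hn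
  have hδ0 : 0 < δ := by positivity
  set t : Fin n → ℝ := fun i => if i = i0 then δ ^ (1 - (n : ℤ)) else δ with ht
  have ht0 : ∀ i, 0 < t i := by
    intro i
    by_cases h : i = i0 <;> simp [ht, h, zpow_pos hδ0, hδ0]
  set U : Matrix (Fin n) (Fin n) ℂ := (hH.eigenvectorUnitary : Matrix (Fin n) (Fin n) ℂ)
    with hU
  have hUU : star U * U = 1 := mem_unitaryGroup_iff'.mp hH.eigenvectorUnitary.2
  have hUU' : U * star U = 1 := mem_unitaryGroup_iff.mp hH.eigenvectorUnitary.2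
  set D : Matrix (Fin n) (Fin n) ℂ := diagonal (fun i => (t i : ℂ)) with hD
  have hDpos : D.PosDef := by
    rw [hD, posDef_diagonal_iff]
    intro i
    exact_mod_cast (by exact_mod_cast ht0 i : (0:ℂ) < (t i : ℂ))
  refine ⟨U * D * star U, ?_, ?_, ?_⟩
  · -- PosDef
    refine PosDef.of_dotProduct_mulVec_pos (hDpos.posSemidef.mul_mul_conjTranspose_same U).1
      fun x hx => ?_
    have hy : star U *ᵥ x ≠ 0 := by
      intro h
      apply hx
      have := congrArg (U *ᵥ ·) h
      simpa [mulVec_mulVec, hUU'] using this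
    have key : star x ⬝ᵥ (U * D * star U) *ᵥ x
        = star (star U *ᵥ x) ⬝ᵥ D *ᵥ (star U *ᵥ x) := by
      rw [← mulVec_mulVec, ← mulVec_mulVec, dotProduct_mulVec (star x), star_mulVec]
      congr 1
      simp [Matrix.star_eq_conjTranspose]
    rw [key]
    exact hDpos.dotProduct_mulVec_pos hy
  · -- det = 1
    have h1 : det (U * D * star U) = det D := by
      have hdetU : (star U).det * U.det = 1 := by rw [← det_mul, hUU, det_one]
      rw [det_mul, det_mul]
      linear_combination D.det * hdetU
    rw [h1, hD, det_diagonal]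
    have : (∏ i, (t i : ℂ)) = ((∏ i, t i : ℝ) : ℂ) := by push_cast; ring
    rw [this]
    have hp : (∏ i, t i) = 1 := by
      rw [← Finset.prod_erase_mul _ _ (Finset.mem_univ i0)]
      have h2 : (∏ i ∈ Finset.univ.erase i0, t i) = δ ^ (n - 1) := by
        rw [Finset.prod_congr rfl (fun i hi => ?_), Finset.prod_const,
          Finset.card_erase_of_mem (Finset.mem_univ i0), Finset.card_univ, Fintype.card_fin]
        simp [ht, Finset.mem_erase.mp hi |>.1]
      have h3 : t i0 = δ ^ (1 - (n : ℤ)) := by simp [ht]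
      rw [h2, h3, ← zpow_natCast δ (n - 1), ← zpow_add₀ (ne_of_gt hδ0)]
      have h4 : ((n - 1 : ℕ) : ℤ) + (1 - (n : ℤ)) = 0 := by omega
      rw [h4, zpow_zero]
    rw [hp]; simp
  · -- trace bound
    have hQspec : Q = U * diagonal (RCLike.ofReal ∘ μ) * star U := hH.spectral_theorem
    have htr : ((U * D * star U) * Q).trace = ∑ i, ((t i : ℂ) * (μ i : ℂ)) := by
      rw [hQspec]
      have : (U * D * star U) * (U * diagonal (RCLike.ofReal ∘ μ) * star U)
          = U * (D * diagonal (RCLike.ofReal ∘ μ)) * star U := by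
        calc (U * D * star U) * (U * diagonal (RCLike.ofReal ∘ μ) * star U)
            = U * D * ((star U * U) * (diagonal (RCLike.ofReal ∘ μ) * star U)) := by
              simp only [mul_assoc]
          _ = U * (D * diagonal (RCLike.ofReal ∘ μ)) * star U := by
              rw [hUU, one_mul]; simp only [mul_assoc]
      rw [this, trace_mul_cycle, ← mul_assoc, hUU, one_mul, hD, diagonal_mul_diagonal,
        trace_diagonal]
      rfl
    have hre : (((U * D * star U) * Q).trace).re = ∑ i, t i * μ i := by
      rw [htr]
      simp [Complex.ofReal_re]
    rw [hre]
    have hsum : (∑ i, t i * μ i) = δ * S := by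
      rw [← Finset.sum_erase_add _ _ (Finset.mem_univ i0), hi0', mul_zero, add_zero,
        hS, Finset.mul_sum]
      refine Finset.sum_congr rfl fun i hi => ?_
      simp [ht, Finset.mem_erase.mp hi |>.1]
    rw [hsum]
    have key : 1 / (n : ℝ) * (δ * S) = ε * (S / (2 * (S + 1))) := by
      field_simp [hδ]
      have hδ' : δ * (2 * (S + 1)) = ε * n := by
        rw [hδ, div_mul_cancel₀]; positivity
      linear_combination S * hδ'
    rw [key]
    have : S / (2 * (S + 1)) < 1 := by
      rw [div_lt_one (by linarith)]
      linarith
    calc ε * (S / (2 * (S + 1))) < ε * 1 := by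
          exact mul_lt_mul_of_pos_left this hε
      _ = ε := mul_one ε
end

section
/- Let n ≥ 1, let Q be an n×n complex Hermitian positive semidefinite matrix and let c ≥ 0 be a real number. Then Re(det Q) ≥ cⁿ if and only if for every H ∈ ℋ one has (1/n)·Re(tr(H·Q)) ≥ c. -/
open Matrix ComplexOrder

section Aux

variable {n : ℕ}

private lemma aux_amgm (hn : 1 ≤ n) (l : Fin n → ℝ) (hl : ∀ i, 0 ≤ l i)
    {c : ℝ} (hc : 0 ≤ c) (h : c ^ n ≤ ∏ i, l i) :
    c ≤ (1 / (n : ℝ)) * ∑ i, l i := by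
  have hn0 : n ≠ 0 := by omega
  have hnR : (0:ℝ) < n := by exact_mod_cast Nat.pos_of_ne_zero hn0
  have key := Real.geom_mean_le_arith_mean_weighted Finset.univ
    (fun _ => (n : ℝ)⁻¹) l (fun i _ => by positivity)
    (by simp [Finset.card_univ]; field_simp) (fun i _ => hl i)
  calc c = (c ^ n) ^ ((n : ℝ)⁻¹) := (Real.pow_rpow_inv_natCast hc hn0).symm
    _ ≤ (∏ i, l i) ^ ((n : ℝ)⁻¹) :=
        Real.rpow_le_rpow (by positivity) h (by positivity)
    _ = ∏ i, (l i) ^ ((n : ℝ)⁻¹) :=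
        (Real.finset_prod_rpow _ _ (fun i _ => hl i) _).symm
    _ ≤ ∑ i, (n : ℝ)⁻¹ * l i := key
    _ = (1 / (n : ℝ)) * ∑ i, l i := by rw [Finset.mul_sum]; simp [one_div]

private lemma aux_det_re {A : Matrix (Fin n) (Fin n) ℂ} (hA : A.IsHermitian) :
    A.det = ((∏ i, hA.eigenvalues i : ℝ) : ℂ) := by
  rw [hA.det_eq_prod_eigenvalues]
  norm_cast

private lemma aux_posDef_of_det_ne_zero {A : Matrix (Fin n) (Fin n) ℂ}
    (hA : A.PosSemidef) (hd : A.det ≠ 0) : A.PosDef := by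
  exact hA.posDef_iff_det_ne_zero.mpr hd

private lemma aux_trace_eq {A : Matrix (Fin n) (Fin n) ℂ} (hA : A.IsHermitian) :
    A.trace = ((∑ i, hA.eigenvalues i : ℝ) : ℂ) := by
  conv_lhs => rw [hA.spectral_theorem, Unitary.conjStarAlgAut_apply]
  rw [Matrix.trace_mul_cycle,
    Matrix.mem_unitaryGroup_iff'.mp (Matrix.IsHermitian.eigenvectorUnitary hA).2,
    one_mul, trace_diagonal]
  push_cast
  rfl

private lemma aux_trace_conj_mul {A : Matrix (Fin n) (Fin n) ℂ} (hA : A.IsHermitian)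
    (f : Fin n → ℝ) :
    ((((Matrix.IsHermitian.eigenvectorUnitary hA) : Matrix (Fin n) (Fin n) ℂ)
      * diagonal (RCLike.ofReal ∘ f)
      * star ((Matrix.IsHermitian.eigenvectorUnitary hA) : Matrix (Fin n) (Fin n) ℂ)) * A).trace
      = ((∑ i, f i * hA.eigenvalues i : ℝ) : ℂ) := by
  set U : Matrix (Fin n) (Fin n) ℂ := (Matrix.IsHermitian.eigenvectorUnitary hA : Matrix (Fin n) (Fin n) ℂ) with hUdef
  have hU : star U * U = 1 :=
    Matrix.mem_unitaryGroup_iff'.mp (Matrix.IsHermitian.eigenvectorUnitary hA).2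
  conv_lhs => rw [hA.spectral_theorem, Unitary.conjStarAlgAut_apply]
  simp only [Matrix.mul_assoc]
  rw [show star U * (U * (diagonal (RCLike.ofReal ∘ hA.eigenvalues) * star U))
      = diagonal (RCLike.ofReal ∘ hA.eigenvalues) * star U from by
    rw [← Matrix.mul_assoc, hU, one_mul]]
  rw [Matrix.trace_mul_comm]
  simp only [Matrix.mul_assoc]
  rw [show star U * U = 1 from hU]
  rw [Matrix.mul_one, diagonal_mul_diagonal, trace_diagonal]
  push_cast
  rfl

private lemma aux_det_conj {A : Matrix (Fin n) (Fin n) ℂ} (hA : A.IsHermitian)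
    (f : Fin n → ℝ) :
    (((Matrix.IsHermitian.eigenvectorUnitary hA) : Matrix (Fin n) (Fin n) ℂ)
      * diagonal (RCLike.ofReal ∘ f)
      * star ((Matrix.IsHermitian.eigenvectorUnitary hA) : Matrix (Fin n) (Fin n) ℂ)).det
      = ((∏ i, f i : ℝ) : ℂ) := by
  set U : Matrix (Fin n) (Fin n) ℂ := (Matrix.IsHermitian.eigenvectorUnitary hA : Matrix (Fin n) (Fin n) ℂ)
  have hU : U.det * (star U).det = 1 := by
    rw [← det_mul, Matrix.mem_unitaryGroup_iff.mp (Matrix.IsHermitian.eigenvectorUnitary hA).2,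
      det_one]
  rw [det_mul, det_mul, det_diagonal, mul_right_comm, hU, one_mul]
  push_cast
  rfl

private lemma aux_posSemidef_conj {A : Matrix (Fin n) (Fin n) ℂ} (hA : A.IsHermitian)
    (f : Fin n → ℝ) (hf : ∀ i, 0 ≤ f i) :
    (((Matrix.IsHermitian.eigenvectorUnitary hA) : Matrix (Fin n) (Fin n) ℂ)
      * diagonal (RCLike.ofReal ∘ f)
      * star ((Matrix.IsHermitian.eigenvectorUnitary hA) : Matrix (Fin n) (Fin n) ℂ)).PosSemidef := by
  rw [star_eq_conjTranspose]
  refine Matrix.PosSemidef.mul_mul_conjTranspose_same ?_ _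
  refine Matrix.PosSemidef.diagonal ?_
  intro i
  simpa using Complex.zero_le_real.mpr (hf i)

/-- Packaged test against the conjugated diagonal matrix built from `f`. -/
private lemma aux_key {Q : Matrix (Fin n) (Fin n) ℂ} (hQ : Q.PosSemidef) {c : ℝ}
    (h : ∀ H : Matrix (Fin n) (Fin n) ℂ, H.PosDef → H.det = 1 →
        (1 / (n : ℝ)) * ((H * Q).trace).re ≥ c)
    (f : Fin n → ℝ) (hf : ∀ i, 0 < f i) (hprod : ∏ i, f i = 1) :
    c ≤ (1 / (n : ℝ)) * ∑ i, f i * hQ.1.eigenvalues i := by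
  have hHdet := aux_det_conj hQ.1 f
  rw [hprod] at hHdet
  have hHdet1 : (((Matrix.IsHermitian.eigenvectorUnitary hQ.1) : Matrix (Fin n) (Fin n) ℂ)
      * diagonal (RCLike.ofReal ∘ f)
      * star ((Matrix.IsHermitian.eigenvectorUnitary hQ.1) : Matrix (Fin n) (Fin n) ℂ)).det = 1 := by
    rw [hHdet]; norm_num
  have hHpd := aux_posDef_of_det_ne_zero (aux_posSemidef_conj hQ.1 f fun i => (hf i).le)
      (by rw [hHdet1]; exact one_ne_zero)
  have hkey := h _ hHpd hHdet1
  rwa [aux_trace_conj_mul hQ.1 f, Complex.ofReal_re] at hkey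

end Aux

/-- The pointwise matrix content of the equivalence (i) ⇔ (iii) of the Main
Theorem: for `Q` Hermitian positive semidefinite and `c ≥ 0`,
`Re(det Q) ≥ cⁿ` iff `(1/n)·Re(tr(H·Q)) ≥ c` for every Hermitian positive
definite `H` with `det H = 1`. -/
theorem det_ge_pow_iff_forall_normalized_trace_ge (n : ℕ) (hn : 1 ≤ n)
    (Q : Matrix (Fin n) (Fin n) ℂ) (hQ : Q.PosSemidef) (c : ℝ) (hc : 0 ≤ c) :
    Q.det.re ≥ c ^ n ↔
      ∀ H : Matrix (Fin n) (Fin n) ℂ, H.PosDef → H.det = 1 →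
        (1 / (n : ℝ)) * ((H * Q).trace).re ≥ c := by
  have hn0 : n ≠ 0 := by omega
  have hdre : Q.det.re = ∏ i, hQ.1.eigenvalues i := by rw [aux_det_re hQ.1, Complex.ofReal_re]
  constructor
  · -- forward direction
    intro h H hH hdet
    set S : Matrix (Fin n) (Fin n) ℂ := (open scoped MatrixOrder in CFC.sqrt H) with hSdef
    have hS : S.PosSemidef := by
      open scoped MatrixOrder in exact Matrix.nonneg_iff_posSemidef.mp (CFC.sqrt_nonneg H)
    have hSS : S * S = H := by
      open scoped MatrixOrder in
        exact CFC.sqrt_mul_sqrt_self H (Matrix.nonneg_iff_posSemidef.mpr hH.posSemidef)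
    set M : Matrix (Fin n) (Fin n) ℂ := S * Q * S with hMdef
    have hM : M.PosSemidef := by
      have := hQ.mul_mul_conjTranspose_same S
      rwa [hS.1] at this
    have htr : M.trace = (H * Q).trace := by
      rw [hMdef, Matrix.trace_mul_cycle, hSS]
    have hdetM : M.det = Q.det := by
      rw [hMdef, det_mul, det_mul, mul_right_comm, mul_comm S.det, ← det_mul, hSS, hdet, one_mul]
    have hprod : c ^ n ≤ ∏ i, hM.1.eigenvalues i := by
      have h2 : M.det.re = ∏ i, hM.1.eigenvalues i := by
        rw [aux_det_re hM.1, Complex.ofReal_re]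
      rw [← h2, hdetM]; exact h
    have hsum := aux_amgm hn hM.1.eigenvalues hM.eigenvalues_nonneg hc hprod
    have htr' : (H * Q).trace.re = ∑ i, hM.1.eigenvalues i := by
      rw [← htr, aux_trace_eq hM.1, Complex.ofReal_re]
    rw [ge_iff_le, htr']
    exact hsum
  · -- reverse direction
    intro h
    have hlam : ∀ i, 0 ≤ hQ.1.eigenvalues i := hQ.eigenvalues_nonneg
    rcases (Finset.prod_nonneg fun i (_ : i ∈ Finset.univ) => hlam i).lt_or_eq with hpos | h0
    · -- positive determinant case
      have hlampos : ∀ i, 0 < hQ.1.eigenvalues i := by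
        intro i
        refine (hlam i).lt_of_ne' ?_
        intro hzero
        exact absurd (Finset.prod_eq_zero (Finset.mem_univ i) hzero) hpos.ne'
      set α : ℝ := (∏ i, hQ.1.eigenvalues i) ^ ((n : ℝ)⁻¹) with hαdef
      have hα : 0 < α := Real.rpow_pos_of_pos hpos _
      have hαn : α ^ n = ∏ i, hQ.1.eigenvalues i := Real.rpow_inv_natCast_pow hpos.le hn0
      have hfpos : ∀ i, 0 < α / hQ.1.eigenvalues i := fun i => div_pos hα (hlampos i)
      have hprodf : ∏ i, α / hQ.1.eigenvalues i = 1 := by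
        rw [Finset.prod_div_distrib, Finset.prod_const, Finset.card_univ, Fintype.card_fin,
          hαn, div_self hpos.ne']
      have hkey := aux_key hQ h _ hfpos hprodf
      have hsum : ∑ i, (α / hQ.1.eigenvalues i) * hQ.1.eigenvalues i = n * α := by
        have he : ∀ i, (α / hQ.1.eigenvalues i) * hQ.1.eigenvalues i = α := fun i =>
          div_mul_cancel₀ _ (hlampos i).ne'
        simp [he, Finset.sum_const, Finset.card_univ]
      rw [hsum] at hkey
      have hnR : (0:ℝ) < n := by exact_mod_cast Nat.pos_of_ne_zero hn0
      have hcα : c ≤ α := by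
        have hx : (1 / (n:ℝ)) * ((n:ℝ) * α) = α := by field_simp
        rwa [hx] at hkey
      rw [ge_iff_le, hdre, ← hαn]
      exact pow_le_pow_left₀ hc hcα n
    · -- zero determinant case
      have hczero : c = 0 := by
        by_contra hcne
        have hcpos : 0 < c := hc.lt_of_ne' hcne
        obtain ⟨i₀, -, hi₀⟩ := Finset.prod_eq_zero_iff.mp h0.symm
        set Ssum : ℝ := ∑ i, hQ.1.eigenvalues i with hSsumdef
        have hSsum : 0 ≤ Ssum := Finset.sum_nonneg fun i _ => hlam i
        set t : ℝ := c / (2 * (Ssum + 1)) with htdef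
        have ht : 0 < t := div_pos hcpos (by linarith)
        set f : Fin n → ℝ := fun i => if i = i₀ then (t⁻¹) ^ (n - 1) else t with hfdef
        have hfpos : ∀ i, 0 < f i := by
          intro i
          by_cases hi : i = i₀
          · simp only [hfdef, if_pos hi]
            positivity
          · simpa [hfdef, hi] using ht
        have hprodf : ∏ i, f i = 1 := by
          rw [← Finset.mul_prod_erase Finset.univ f (Finset.mem_univ i₀)]
          have h1 : f i₀ = t⁻¹ ^ (n - 1) := by simp [hfdef]
          have h2 : ∏ i ∈ Finset.univ.erase i₀, f i = t ^ (n - 1) := by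
            rw [Finset.prod_congr rfl (fun i hi => show f i = t by
              simp [hfdef, (Finset.mem_erase.mp hi).1]), Finset.prod_const,
              Finset.card_erase_of_mem (Finset.mem_univ i₀), Finset.card_univ, Fintype.card_fin]
          rw [h1, h2, ← mul_pow, inv_mul_cancel₀ ht.ne', one_pow]
        have hkey := aux_key hQ h f hfpos hprodf
        have hsumle : ∑ i, f i * hQ.1.eigenvalues i ≤ t * Ssum := by
          rw [hSsumdef, Finset.mul_sum]
          refine Finset.sum_le_sum fun i _ => ?_
          by_cases hi : i = i₀
          · simp [hi, hi₀]
          · simp [hfdef, hi]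
        have h1n : (1 / (n:ℝ)) ≤ 1 := by
          have h1 : (1:ℝ) ≤ n := by exact_mod_cast hn
          rw [div_le_one (by linarith)]
          exact h1
        have h1npos : 0 < (1 / (n:ℝ)) := by
          have : (0:ℝ) < n := by exact_mod_cast Nat.pos_of_ne_zero hn0
          positivity
        have hts : t * Ssum < c := by
          rw [htdef, div_mul_eq_mul_div, div_lt_iff₀ (by linarith)]
          nlinarith
        have hchain : (1 / (n:ℝ)) * (∑ i, f i * hQ.1.eigenvalues i) ≤ t * Ssum := by
          calc (1 / (n:ℝ)) * (∑ i, f i * hQ.1.eigenvalues i)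
              ≤ (1 / (n:ℝ)) * (t * Ssum) := mul_le_mul_of_nonneg_left hsumle h1npos.le
            _ ≤ 1 * (t * Ssum) := mul_le_mul_of_nonneg_right h1n (by positivity)
            _ = t * Ssum := one_mul _
        linarith
      rw [ge_iff_le, hdre, ← h0, hczero, zero_pow hn0]
end

section
/- Let n ≥ 1 and let Q₁, …, Qₙ be n×n complex Hermitian positive semidefinite matrices. For a permutation σ of {1, …, n}, let M_σ be the n×n matrix whose (j,k) entry is the (j,k) entry of Q_{σ(k)} (i.e., the k-th column of M_σ is the k-th column of Q_{σ(k)}). Then (1/n!) · Re( Σ_{σ ∈ Sₙ} det M_σ ) ≥ Π_{i=1}^{n} (Re(det Q_i))^{1/n}. -/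
open Matrix ComplexOrder

open scoped MatrixOrder in
noncomputable def Matrix.PosSemidef.sqrt {m : ℕ} {A : Matrix (Fin m) (Fin m) ℂ}
    (_ : A.PosSemidef) : Matrix (Fin m) (Fin m) ℂ := CFC.sqrt A

open scoped MatrixOrder in
lemma Matrix.PosSemidef.posSemidef_sqrt {m : ℕ} {A : Matrix (Fin m) (Fin m) ℂ}
    (hA : A.PosSemidef) : hA.sqrt.PosSemidef := (CFC.sqrt_nonneg A).posSemidef

open scoped MatrixOrder in
lemma Matrix.PosSemidef.sqrt_mul_self {m : ℕ} {A : Matrix (Fin m) (Fin m) ℂ}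
    (hA : A.PosSemidef) : hA.sqrt * hA.sqrt = A := CFC.sqrt_mul_sqrt_self A hA.nonneg

namespace MixedDetAux
open Finset Equiv


noncomputable def Dsum (n : ℕ) (Q : Fin n → Matrix (Fin n) (Fin n) ℂ) : ℂ :=
  ∑ σ : Equiv.Perm (Fin n), ∑ τ : Equiv.Perm (Fin n),
    ((Equiv.Perm.sign σ : ℤ) : ℂ) * ((Equiv.Perm.sign τ : ℤ) : ℂ) * ∏ i, Q i (τ i) (σ i)

/-- The pair-involution used to reindex the double permutation sum. -/
def pairEquiv (n : ℕ) : (Perm (Fin n) × Perm (Fin n)) ≃ (Perm (Fin n) × Perm (Fin n)) where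
  toFun p := (p.1⁻¹, p.2 * p.1⁻¹)
  invFun p := (p.1⁻¹, p.2 * p.1⁻¹)
  left_inv p := by simp [mul_assoc]
  right_inv p := by simp [mul_assoc]

lemma I1 {n : ℕ} (Q : Fin n → Matrix (Fin n) (Fin n) ℂ) :
    (∑ σ : Equiv.Perm (Fin n), (Matrix.of fun j k => Q (σ k) j k).det) = Dsum n Q := by
  have h1 : ∀ σ : Perm (Fin n), (Matrix.of fun j k => Q (σ k) j k).det
      = ∑ τ : Perm (Fin n), ((Perm.sign τ : ℤ) : ℂ) * ∏ k, Q (σ k) (τ k) k := by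
    intro σ; rw [det_apply']; rfl
  simp_rw [h1, Dsum]
  rw [← Finset.sum_product', ← Finset.sum_product']
  refine Fintype.sum_equiv (pairEquiv n) _ _ ?_
  rintro ⟨σ, τ⟩
  simp only [pairEquiv, Equiv.coe_fn_mk]
  have hprod : (∏ i, Q i ((τ * σ⁻¹) i) (σ⁻¹ i)) = ∏ k, Q (σ k) (τ k) k := by
    rw [← Equiv.prod_comp σ (fun i => Q i ((τ * σ⁻¹) i) (σ⁻¹ i))]
    simp [Perm.mul_apply]
  rw [hprod]
  have hsign : ((Perm.sign σ⁻¹ : ℤ) : ℂ) * ((Perm.sign (τ * σ⁻¹) : ℤ) : ℂ)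
      = ((Perm.sign τ : ℤ) : ℂ) := by
    rw [Perm.sign_mul, Perm.sign_inv]
    push_cast
    rcases Int.units_eq_one_or (Perm.sign σ) with h | h <;>
      rcases Int.units_eq_one_or (Perm.sign τ) with h' | h' <;> simp [h, h']
  rw [hsign]

/-- Row-selection matrix: row `i` is row `j i` of `B i`. -/
def Wmat {n : ℕ} (B : Fin n → Matrix (Fin n) (Fin n) ℂ) (j : Fin n → Fin n) :
    Matrix (Fin n) (Fin n) ℂ := Matrix.of fun i k => B i (j i) k

noncomputable def Tre {n : ℕ} (B : Fin n → Matrix (Fin n) (Fin n) ℂ) : ℝ :=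
  ∑ j : Fin n → Fin n, Complex.normSq (Wmat B j).det

lemma conj_sign {n : ℕ} (τ : Perm (Fin n)) :
    (starRingEnd ℂ) ((Perm.sign τ : ℤ) : ℂ) = ((Perm.sign τ : ℤ) : ℂ) := by
  rcases Int.units_eq_one_or (Perm.sign τ) with h | h <;> simp [h]

lemma I2 {n : ℕ} (B : Fin n → Matrix (Fin n) (Fin n) ℂ) :
    Dsum n (fun i => (B i)ᴴ * (B i)) = ((Tre B : ℝ) : ℂ) := by
  have hterm : ∀ j, ((Complex.normSq (Wmat B j).det : ℝ) : ℂ)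
      = ∑ σ : Perm (Fin n), ∑ τ : Perm (Fin n),
        ((Perm.sign σ : ℤ) : ℂ) * ((Perm.sign τ : ℤ) : ℂ) *
          ∏ i, ((starRingEnd ℂ) (B i (j i) (τ i)) * B i (j i) (σ i)) := by
    intro j
    rw [← Complex.mul_conj]
    rw [← Matrix.det_transpose (Wmat B j), det_apply', map_sum, Finset.sum_mul_sum]
    refine Finset.sum_congr rfl fun σ _ => Finset.sum_congr rfl fun τ _ => ?_
    rw [_root_.map_mul, map_prod, conj_sign τ, Finset.prod_mul_distrib]
    simp only [Matrix.transpose_apply, Wmat, Matrix.of_apply]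
    ring
  rw [Tre, Complex.ofReal_sum]
  simp_rw [hterm]
  rw [Finset.sum_comm, Dsum]
  refine Finset.sum_congr rfl fun σ _ => ?_
  rw [Finset.sum_comm]
  refine Finset.sum_congr rfl fun τ _ => ?_
  rw [← Finset.mul_sum]
  congr 1
  rw [← Fintype.prod_sum (fun i k => (starRingEnd ℂ) (B i k (τ i)) * B i k (σ i))]
  refine Finset.prod_congr rfl fun i _ => ?_
  simp [Matrix.mul_apply, Matrix.conjTranspose_apply]

lemma Tre_nonneg {n : ℕ} (B : Fin n → Matrix (Fin n) (Fin n) ℂ) : 0 ≤ Tre B :=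
  Finset.sum_nonneg fun _ _ => Complex.normSq_nonneg _

lemma Wmat_mul {n : ℕ} (B : Fin n → Matrix (Fin n) (Fin n) ℂ)
    (S : Matrix (Fin n) (Fin n) ℂ) (j : Fin n → Fin n) :
    Wmat (fun i => B i * S) j = Wmat B j * S := by
  ext i k
  simp [Wmat, Matrix.mul_apply]

lemma Tre_mul_right {n : ℕ} (B : Fin n → Matrix (Fin n) (Fin n) ℂ)
    (S : Matrix (Fin n) (Fin n) ℂ) :
    Tre (fun i => B i * S) = Complex.normSq S.det * Tre B := by
  rw [Tre, Tre, Finset.mul_sum]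
  refine Finset.sum_congr rfl fun j _ => ?_
  rw [Wmat_mul, det_mul, Complex.normSq_mul]
  ring

/-- Laplace-type expansion of `Dsum` when the 0-th matrix is the identity. -/
lemma Dsum_expansion {n : ℕ} (Q : Fin (n + 1) → Matrix (Fin (n + 1)) (Fin (n + 1)) ℂ)
    (hQ0 : Q 0 = 1) :
    Dsum (n + 1) Q = ∑ p : Fin (n + 1),
      Dsum n (fun j => (Q j.succ).submatrix (fun k => Equiv.swap 0 p k.succ)
        (fun k => Equiv.swap 0 p k.succ)) := by
  rw [Dsum]
  rw [← Perm.decomposeFin.symm.sum_comp]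
  rw [Fintype.sum_prod_type]
  refine Finset.sum_congr rfl fun p _ => ?_
  have inner : ∀ σ' : Perm (Fin n),
      (∑ τ : Perm (Fin (n+1)), ((Perm.sign (Perm.decomposeFin.symm (p, σ')) : ℤ) : ℂ)
        * ((Perm.sign τ : ℤ) : ℂ) * ∏ i, Q i (τ i) (Perm.decomposeFin.symm (p, σ') i))
      = ∑ τ' : Perm (Fin n), ((Perm.sign σ' : ℤ) : ℂ) * ((Perm.sign τ' : ℤ) : ℂ)
          * ∏ k, (Q k.succ).submatrix (fun k => Equiv.swap 0 p k.succ)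
              (fun k => Equiv.swap 0 p k.succ) (τ' k) (σ' k) := by
    intro σ'
    rw [← Perm.decomposeFin.symm.sum_comp, Fintype.sum_prod_type]
    rw [Finset.sum_eq_single_of_mem p (Finset.mem_univ p)]
    · refine Finset.sum_congr rfl fun τ' _ => ?_
      have hprod : (∏ i, Q i (Perm.decomposeFin.symm (p, τ') i)
            (Perm.decomposeFin.symm (p, σ') i))
          = ∏ k : Fin n, (Q k.succ).submatrix (fun k => Equiv.swap 0 p k.succ)
              (fun k => Equiv.swap 0 p k.succ) (τ' k) (σ' k) := by
        rw [Fin.prod_univ_succ, Perm.decomposeFin_symm_apply_zero,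
          Perm.decomposeFin_symm_apply_zero, hQ0, Matrix.one_apply_eq, one_mul]
        refine Finset.prod_congr rfl fun k _ => ?_
        rw [Perm.decomposeFin_symm_apply_succ, Perm.decomposeFin_symm_apply_succ]
        rfl
      rw [hprod]
      congr 1
      rw [Perm.decomposeFin.symm_sign, Perm.decomposeFin.symm_sign]
      rcases eq_or_ne p 0 with h | h <;> simp [h]
    · intro q _ hq
      refine Finset.sum_eq_zero fun τ' _ => ?_
      rw [Fin.prod_univ_succ, Perm.decomposeFin_symm_apply_zero,
        Perm.decomposeFin_symm_apply_zero, hQ0, Matrix.one_apply_ne hq]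
      ring
  simp_rw [inner]
  rw [Dsum]


lemma psd_det_real {m : ℕ} {A : Matrix (Fin m) (Fin m) ℂ} (hA : A.PosSemidef) :
    A.det = ((A.det.re : ℝ) : ℂ) ∧ 0 ≤ A.det.re := by
  have h2 : A.det = ((∏ i, hA.isHermitian.eigenvalues i : ℝ) : ℂ) := by
    rw [hA.isHermitian.det_eq_prod_eigenvalues]; push_cast; rfl
  have h3 : A.det.re = ∏ i, hA.isHermitian.eigenvalues i := by
    rw [h2, Complex.ofReal_re]
  exact ⟨by rw [h2, Complex.ofReal_re], by
    rw [h3]; exact Finset.prod_nonneg fun i _ => hA.eigenvalues_nonneg i⟩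

lemma herm_diag_real {m : ℕ} {A : Matrix (Fin m) (Fin m) ℂ} (hA : A.IsHermitian)
    (p : Fin m) : A p p = ((A p p).re : ℂ) := by
  have := congrFun (congrFun hA.symm p) p
  rw [Matrix.conjTranspose_apply] at this
  exact ((Complex.conj_eq_iff_re).mp this.symm).symm

lemma psd_diag_nonneg {m : ℕ} {A : Matrix (Fin m) (Fin m) ℂ} (hA : A.PosSemidef)
    (p : Fin m) : 0 ≤ (A p p).re := by
  have h := hA.re_dotProduct_nonneg (Pi.single p 1)
  simpa [dotProduct, Matrix.mulVec, Pi.single_apply, Finset.mul_sum] using h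

lemma trace_eq_sum_eigen {m : ℕ} {A : Matrix (Fin m) (Fin m) ℂ} (hA : A.IsHermitian) :
    A.trace = ((∑ i, hA.eigenvalues i : ℝ) : ℂ) := by
  conv_lhs => rw [hA.spectral_theorem]
  rw [Unitary.conjStarAlgAut_apply, Matrix.trace_mul_cycle]
  have hu : (star (hA.eigenvectorUnitary : Matrix (Fin m) (Fin m) ℂ)) *
      (hA.eigenvectorUnitary : Matrix (Fin m) (Fin m) ℂ) = 1 :=
    Unitary.coe_star_mul_self hA.eigenvectorUnitary
  rw [hu, one_mul, Matrix.trace_diagonal]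
  push_cast; rfl

/-- Hadamard's inequality for positive semidefinite complex matrices. -/
lemma hadamard {m : ℕ} {W : Matrix (Fin m) (Fin m) ℂ} (hW : W.PosSemidef) :
    W.det.re ≤ ∏ p, (W p p).re := by
  rcases Nat.eq_zero_or_pos m with hm | hm
  · subst hm; simp [Matrix.det_isEmpty]
  by_cases hdiag : ∀ p, 0 < (W p p).re
  · -- normalize diagonal to 1
    set d : Fin m → ℝ := fun p => (Real.sqrt ((W p p).re))⁻¹ with hd
    have hdpos : ∀ p, 0 < d p := fun p => by
      rw [hd]; exact inv_pos.mpr (Real.sqrt_pos.mpr (hdiag p))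
    set D : Matrix (Fin m) (Fin m) ℂ := Matrix.diagonal (fun p => (d p : ℂ)) with hD
    have hDH : Dᴴ = D := by
      rw [hD]
      ext p q
      rw [Matrix.conjTranspose_apply, Matrix.diagonal_apply, Matrix.diagonal_apply]
      rcases eq_or_ne p q with h | h
      · subst h; simp
      · rw [if_neg h, if_neg (Ne.symm h)]; simp
    have hV : (D * W * D).PosSemidef := by
      have := hW.mul_mul_conjTranspose_same D
      rwa [hDH] at this
    set V := D * W * D with hVdef
    have hVdiag : ∀ p, V p p = 1 := by
      intro p
      rw [hVdef, Matrix.mul_apply]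
      have hterm : ∀ k, (D * W) p k * D k p
          = (if k = p then ((d p : ℂ) * W p p * d p) else 0) := by
        intro k
        rw [hD, Matrix.diagonal_mul, Matrix.diagonal_apply]
        split_ifs with h
        · subst h; ring
        · ring
      rw [Finset.sum_congr rfl fun k _ => hterm k, Finset.sum_ite_eq' Finset.univ p]
      simp only [Finset.mem_univ, if_true]
      rw [herm_diag_real hW.isHermitian p, hd]
      have hx : (0:ℝ) < (W p p).re := hdiag p
      have : ((Real.sqrt ((W p p).re))⁻¹ * (W p p).re * (Real.sqrt ((W p p).re))⁻¹ : ℝ)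
          = 1 := by
        rw [mul_comm _ ((W p p).re), mul_assoc, ← mul_inv]
        rw [Real.mul_self_sqrt hx.le]
        exact mul_inv_cancel₀ hx.ne'
      push_cast
      exact_mod_cast this
    -- eigenvalues of V
    have hμnn : ∀ i, 0 ≤ hV.isHermitian.eigenvalues i := fun i => hV.eigenvalues_nonneg i
    have htr : (∑ i, hV.isHermitian.eigenvalues i) = m := by
      have h1 := trace_eq_sum_eigen hV.isHermitian
      have h2 : V.trace = (m : ℂ) := by
        rw [Matrix.trace]
        rw [Finset.sum_congr rfl fun p _ => (by rw [Matrix.diag_apply, hVdiag p] :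
          V.diag p = 1)]
        simp
      rw [h2] at h1
      exact_mod_cast h1.symm
    have hdetV : V.det.re = ∏ i, hV.isHermitian.eigenvalues i := by
      have h2 : V.det = ((∏ i, hV.isHermitian.eigenvalues i : ℝ) : ℂ) := by
        rw [hV.isHermitian.det_eq_prod_eigenvalues]; push_cast; rfl
      rw [h2, Complex.ofReal_re]
    -- AM-GM
    have hgm : V.det.re ≤ 1 := by
      rw [hdetV]
      have hmne : (m : ℝ) ≠ 0 := by exact_mod_cast hm.ne'
      have hw : ∑ _i : Fin m, (1 : ℝ)/m = 1 := by
        rw [Finset.sum_const]; simp [Finset.card_univ]; field_simp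
      have hkey := Real.geom_mean_le_arith_mean_weighted Finset.univ
        (fun _ => 1/m) hV.isHermitian.eigenvalues (fun i _ => by positivity) hw
        (fun i _ => hμnn i)
      have harith : ∑ i, (1:ℝ)/m * hV.isHermitian.eigenvalues i = 1 := by
        rw [← Finset.mul_sum, htr]; field_simp
      rw [harith] at hkey
      have hid : (∏ i, hV.isHermitian.eigenvalues i)
          = (∏ i, hV.isHermitian.eigenvalues i ^ ((1:ℝ)/m)) ^ m := by
        rw [← Finset.prod_pow]
        refine Finset.prod_congr rfl fun i _ => ?_
        rw [← Real.rpow_natCast (hV.isHermitian.eigenvalues i ^ ((1:ℝ)/m)) m,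
          ← Real.rpow_mul (hμnn i), one_div, inv_mul_cancel₀ hmne, Real.rpow_one]
      rw [hid]
      calc (∏ i, hV.isHermitian.eigenvalues i ^ ((1:ℝ)/m)) ^ m
          ≤ 1 ^ m := pow_le_pow_left₀
            (Finset.prod_nonneg fun i _ => Real.rpow_nonneg (hμnn i) _) hkey m
        _ = 1 := one_pow m
    -- unfold the determinant relation
    obtain ⟨hWre, hWnn⟩ := psd_det_real hW
    set c := ∏ p, d p with hc
    have hcpos : 0 < c := Finset.prod_pos fun p _ => hdpos p
    have hVre : V.det.re = c^2 * W.det.re := by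
      have hdetD : D.det = ((c : ℝ) : ℂ) := by
        rw [hD, Matrix.det_diagonal, hc]; push_cast; rfl
      obtain ⟨w, hw⟩ : ∃ w : ℝ, W.det = (w : ℂ) := ⟨W.det.re, hWre⟩
      have hwre : W.det.re = w := by rw [hw, Complex.ofReal_re]
      have : V.det = ((c^2 * w : ℝ) : ℂ) := by
        rw [hVdef, det_mul, det_mul, hdetD, hw]; push_cast; ring
      rw [this, Complex.ofReal_re, hwre]
    have hc2 : c^2 = (∏ p, (W p p).re)⁻¹ := by
      rw [hc, ← Finset.prod_pow, ← Finset.prod_inv_distrib]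
      refine Finset.prod_congr rfl fun p _ => ?_
      rw [hd, inv_pow, Real.sq_sqrt (hdiag p).le]
    have hP : 0 < ∏ p, (W p p).re := Finset.prod_pos fun p _ => hdiag p
    have hkey2 : c^2 * W.det.re ≤ 1 := by rw [← hVre]; exact hgm
    have : W.det.re = (∏ p, (W p p).re) * (c^2 * W.det.re) := by
      rw [hc2]; field_simp
    rw [this]
    calc (∏ p, (W p p).re) * (c^2 * W.det.re) ≤ (∏ p, (W p p).re) * 1 :=
          mul_le_mul_of_nonneg_left hkey2 hP.le
      _ = ∏ p, (W p p).re := mul_one _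
  · push_neg at hdiag
    obtain ⟨p, hp⟩ := hdiag
    have hzero : (W p p).re = 0 := le_antisymm hp (psd_diag_nonneg hW p)
    have hWpp : W p p = 0 := by
      rw [herm_diag_real hW.isHermitian p, hzero]; simp
    have hmv : W *ᵥ Pi.single p 1 = 0 := by
      rw [← (hW.dotProduct_mulVec_zero_iff (Pi.single p 1))]
      have h5 : star (Pi.single p 1 : Fin m → ℂ) ⬝ᵥ W *ᵥ Pi.single p 1 = W p p := by
        simp [dotProduct, Matrix.mulVec, Pi.single_apply, Finset.mul_sum]
      rw [h5, hWpp]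
    have hdet : W.det = 0 := by
      rw [← Matrix.exists_mulVec_eq_zero_iff]
      refine ⟨Pi.single p 1, fun h => ?_, hmv⟩
      have := congrFun h p
      simp at this
    rw [hdet]
    simpa using Finset.prod_nonneg fun q _ => psd_diag_nonneg hW q

/-- The column-deleting map used in the expansion. -/
def gmap {m : ℕ} (p : Fin (m + 1)) : Fin m → Fin (m + 1) :=
  fun k => Equiv.swap 0 p k.succ

lemma gmap_injective {m : ℕ} (p : Fin (m + 1)) : Function.Injective (gmap p) :=
  fun a b hab => Fin.succ_injective m ((Equiv.swap 0 p).injective hab)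

lemma det_minor_swap {m : ℕ} (A : Matrix (Fin (m + 1)) (Fin (m + 1)) ℂ) (p : Fin (m + 1)) :
    (A.submatrix (gmap p) (gmap p)).det = (A.submatrix p.succAbove p.succAbove).det := by
  have hg := gmap_injective p
  have hs : Function.Injective p.succAbove := Fin.succAbove_right_injective
  have hrange : Set.range (gmap p) = Set.range p.succAbove := by
    rw [Fin.range_succAbove]
    ext x
    simp only [Set.mem_range, Set.mem_compl_iff, Set.mem_singleton_iff]
    constructor
    · rintro ⟨k, rfl⟩ h
      have h2 := congrArg (Equiv.swap 0 p) h
      rw [gmap, Equiv.swap_apply_self, Equiv.swap_apply_right] at h2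
      exact Fin.succ_ne_zero k h2
    · intro hx
      have hy : Equiv.swap 0 p x ≠ 0 := by
        intro h
        apply hx
        have := congrArg (Equiv.swap 0 p) h
        rwa [Equiv.swap_apply_self, Equiv.swap_apply_left] at this
      refine ⟨(Equiv.swap 0 p x).pred hy, ?_⟩
      rw [gmap, Fin.succ_pred, Equiv.swap_apply_self]
  let φ : Fin m ≃ Fin m :=
    ((Equiv.ofInjective (gmap p) hg).trans
      ((Equiv.setCongr hrange).trans (Equiv.ofInjective p.succAbove hs).symm))
  have hcomm : ∀ k, p.succAbove (φ k) = gmap p k := by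
    intro k
    exact Equiv.apply_ofInjective_symm hs ⟨gmap p k, hrange ▸ Set.mem_range_self k⟩
  have hsub : A.submatrix (gmap p) (gmap p)
      = (A.submatrix p.succAbove p.succAbove).submatrix φ φ := by
    ext a b
    simp [Matrix.submatrix_apply, hcomm]
  rw [hsub, Matrix.det_submatrix_equiv_self]

lemma minor_psd {m : ℕ} {A : Matrix (Fin (m + 1)) (Fin (m + 1)) ℂ} (hA : A.PosSemidef)
    (p : Fin (m + 1)) : (A.submatrix (gmap p) (gmap p)).PosSemidef :=
  hA.submatrix (gmap p)

/-- Product of principal minors dominates `det ^ m`. -/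
lemma prod_minor_ge {m : ℕ} {A : Matrix (Fin (m + 1)) (Fin (m + 1)) ℂ} (hA : A.PosSemidef) :
    (A.det.re) ^ m ≤ ∏ p : Fin (m + 1), ((A.submatrix (gmap p) (gmap p)).det.re) := by
  have hminor_det : ∀ p : Fin (m + 1),
      (A.submatrix (gmap p) (gmap p)).det = A.adjugate p p := by
    intro p
    rw [det_minor_swap, Matrix.adjugate_fin_succ_eq_det_submatrix]
    have : ((-1 : ℂ)) ^ ((p : ℕ) + (p : ℕ)) = 1 := Even.neg_one_pow ⟨p, rfl⟩
    rw [this, one_mul]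
  by_cases hdet : A.det.re = 0
  · rcases Nat.eq_zero_or_pos m with hm | hm
    · subst hm
      have : ∀ p : Fin 1, (A.submatrix (gmap p) (gmap p)).det = 1 := fun p =>
        Matrix.det_isEmpty
      simp [this]
    · rw [hdet, zero_pow hm.ne']
      exact Finset.prod_nonneg fun p _ => (psd_det_real (minor_psd hA p)).2
  · -- positive definite case
    have hdetA : A.det ≠ 0 := fun h => hdet (by rw [h]; simp)
    have hAinv : (A⁻¹).PosSemidef := hA.inv
    obtain ⟨hre, hnn⟩ := psd_det_real hA
    have hpos : 0 < A.det.re := lt_of_le_of_ne hnn (Ne.symm hdet)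
    have hadj : ∀ p : Fin (m + 1), A.adjugate p p = A.det * A⁻¹ p p := by
      intro p
      rw [Matrix.inv_def, Matrix.smul_apply, Ring.inverse_eq_inv', smul_eq_mul]
      field_simp
    have hterm : ∀ p : Fin (m + 1),
        (A.submatrix (gmap p) (gmap p)).det.re = A.det.re * (A⁻¹ p p).re := by
      intro p
      obtain ⟨a, ha⟩ : ∃ a : ℝ, A.det = (a : ℂ) := ⟨_, hre⟩
      obtain ⟨b, hb⟩ : ∃ b : ℝ, A⁻¹ p p = (b : ℂ) := ⟨_, herm_diag_real hAinv.isHermitian p⟩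
      rw [hminor_det p, hadj p, ha, hb, ← Complex.ofReal_mul]
      simp
    rw [Finset.prod_congr rfl fun p _ => hterm p, Finset.prod_mul_distrib,
      Finset.prod_const, Finset.card_univ, Fintype.card_fin]
    have hinvdet : (A⁻¹).det.re = (A.det.re)⁻¹ := by
      obtain ⟨a, ha⟩ : ∃ a : ℝ, A.det = (a : ℂ) := ⟨_, hre⟩
      rw [Matrix.det_nonsing_inv, Ring.inverse_eq_inv', ha, ← Complex.ofReal_inv]
      simp
    have hhad := hadamard hAinv
    rw [hinvdet] at hhad
    calc (A.det.re) ^ m = (A.det.re) ^ (m + 1) * (A.det.re)⁻¹ := by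
          rw [pow_succ]; field_simp
      _ ≤ (A.det.re) ^ (m + 1) * ∏ p, (A⁻¹ p p).re := by
          exact mul_le_mul_of_nonneg_left hhad (pow_nonneg hnn _)


lemma sqrt_factor {m : ℕ} {A : Matrix (Fin m) (Fin m) ℂ} (hA : A.PosSemidef) :
    A = (hA.sqrt)ᴴ * hA.sqrt := by
  have h1 : (hA.sqrt)ᴴ = hA.sqrt := hA.posSemidef_sqrt.isHermitian
  rw [h1, hA.sqrt_mul_self]

lemma Dsum_real {n : ℕ} (Q : Fin n → Matrix (Fin n) (Fin n) ℂ)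
    (hQ : ∀ i, (Q i).PosSemidef) :
    Dsum n Q = ((Tre (fun i => (hQ i).sqrt) : ℝ) : ℂ) := by
  have hQB : Q = fun i => ((hQ i).sqrt)ᴴ * (hQ i).sqrt := funext fun i => sqrt_factor (hQ i)
  conv_lhs => rw [hQB]
  exact I2 _

theorem core : ∀ (n : ℕ) (Q : Fin n → Matrix (Fin n) (Fin n) ℂ),
    (∀ i, (Q i).PosSemidef) →
    (n.factorial : ℝ) * ∏ i, ((Q i).det.re) ^ ((1 : ℝ)/n) ≤ (Dsum n Q).re := by
  intro n
  induction n with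
  | zero =>
    intro Q hQ
    have h : Dsum 0 Q = 1 := by
      rw [Dsum]
      simp
    rw [h]
    simp
  | succ n IH =>
    intro Q hQ
    by_cases h0 : (Q 0).det.re = 0
    · have hz : ((Q 0).det.re) ^ ((1:ℝ)/((n+1 : ℕ) : ℝ)) = 0 := by
        rw [h0, Real.zero_rpow]
        positivity
      rw [Finset.prod_eq_zero (Finset.mem_univ 0) hz, mul_zero, Dsum_real Q hQ]
      simpa using Tre_nonneg (fun i => (hQ i).sqrt)
    · -- positive-determinant case: normalize `Q 0` to the identity
      have hdet0 : (Q 0).det ≠ 0 := fun h => h0 (by rw [h]; simp)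
      set R := (hQ 0).sqrt with hR
      have hRH : Rᴴ = R := (hQ 0).posSemidef_sqrt.isHermitian
      have hRR : R * R = Q 0 := (hQ 0).sqrt_mul_self
      have hdetR : R.det ≠ 0 := fun h => hdet0 (by rw [← hRR, det_mul, h, mul_zero])
      have hRunit : IsUnit R.det := Ne.isUnit hdetR
      set S := R⁻¹ with hS
      have hSH : Sᴴ = S := by rw [hS, Matrix.conjTranspose_nonsing_inv, hRH]
      have hSR : S * R = 1 := Matrix.nonsing_inv_mul R hRunit
      have hRS : R * S = 1 := Matrix.mul_nonsing_inv R hRunit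
      set Q' : Fin (n+1) → Matrix (Fin (n+1)) (Fin (n+1)) ℂ := fun i => S * Q i * S with hQ'
      have hQ'psd : ∀ i, (Q' i).PosSemidef := by
        intro i
        have h := (hQ i).mul_mul_conjTranspose_same S
        rwa [hSH] at h
      have hQ'0 : Q' 0 = 1 := by
        show S * Q 0 * S = 1
        rw [← hRR, show S * (R * R) * S = (S * R) * (R * S) by noncomm_ring, hSR, hRS,
          one_mul]
      set B : Fin (n+1) → Matrix (Fin (n+1)) (Fin (n+1)) ℂ := fun i => (hQ i).sqrt with hB
      have hQB : Q = fun i => (B i)ᴴ * B i := funext fun i => sqrt_factor (hQ i)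
      have hQ'B : Q' = fun i => (B i * S)ᴴ * (B i * S) := by
        funext i
        show S * Q i * S = _
        rw [Matrix.conjTranspose_mul, hSH]
        conv_lhs => rw [hQB]
        rw [← mul_assoc, ← mul_assoc]
      have hDsumQ : Dsum (n+1) Q = ((Tre B : ℝ) : ℂ) := by rw [hQB]; exact I2 B
      have hDsumQ' : Dsum (n+1) Q'
          = ((Complex.normSq S.det * Tre B : ℝ) : ℂ) := by
        rw [hQ'B, I2 (fun i => B i * S), Tre_mul_right]
      -- determinant of S is a positive real (inverse of det of psd sqrt)
      obtain ⟨hRre, hRnn⟩ := psd_det_real (hQ 0).posSemidef_sqrt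
      have hr0 : R.det.re ≠ 0 := fun h => hdetR (by rw [hRre, h]; simp)
      have hdetS : S.det = ((R.det.re⁻¹ : ℝ) : ℂ) := by
        obtain ⟨a, ha⟩ : ∃ a : ℝ, R.det = (a : ℂ) := ⟨_, hRre⟩
        have hare : R.det.re = a := by rw [ha, Complex.ofReal_re]
        rw [hS, Matrix.det_nonsing_inv, Ring.inverse_eq_inv', ha, ← Complex.ofReal_inv]
        simp
      set c : ℝ := (R.det.re⁻¹)^2 with hcdef
      have hc : Complex.normSq S.det = c := by
        rw [hdetS, Complex.normSq_ofReal, hcdef, sq]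
      have hcpos : 0 < c := by
        rw [hcdef]
        positivity
      have hdetQ' : ∀ i, (Q' i).det.re = c * (Q i).det.re := by
        intro i
        obtain ⟨a, ha⟩ : ∃ a : ℝ, (Q i).det = (a : ℂ) := ⟨_, (psd_det_real (hQ i)).1⟩
        have hQ'det : (Q' i).det = ((c * a : ℝ) : ℂ) := by
          show (S * Q i * S).det = _
          rw [det_mul, det_mul, hdetS, ha, hcdef]
          push_cast
          ring
        rw [hQ'det, ha]
        simp
      -- expansion of the normalized tuple
      have hexp := Dsum_expansion Q' hQ'0
      set Rm : Fin (n+1) → Fin n → Matrix (Fin n) (Fin n) ℂ :=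
        fun p j => (Q' j.succ).submatrix (gmap p) (gmap p) with hRm
      have hRmpsd : ∀ p j, (Rm p j).PosSemidef := fun p j => (hQ'psd j.succ).submatrix _
      have hre' : (Dsum (n+1) Q').re = ∑ p, (Dsum n (Rm p)).re := by
        rw [hexp, Complex.re_sum]
        rfl
      -- the per-p quantities
      set x : Fin (n+1) → ℝ :=
        fun p => (n.factorial : ℝ) * ∏ j, ((Rm p j).det.re) ^ ((1:ℝ)/n) with hx
      have hxnn : ∀ p, 0 ≤ x p := fun p => mul_nonneg (Nat.cast_nonneg _)
        (Finset.prod_nonneg fun j _ => Real.rpow_nonneg (psd_det_real (hRmpsd p j)).2 _)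
      have hIHx : ∀ p, x p ≤ (Dsum n (Rm p)).re := fun p => IH (Rm p) (hRmpsd p)
      -- arithmetic-geometric mean over p
      have hmne : (((n+1 : ℕ)) : ℝ) ≠ 0 := by positivity
      have hAMGM : (((n+1:ℕ)) : ℝ) * ∏ p, (x p) ^ ((1:ℝ)/((n+1:ℕ) : ℝ)) ≤ ∑ p, x p := by
        have hw : ∑ _p : Fin (n+1), (1:ℝ)/((n+1:ℕ) : ℝ) = 1 := by
          rw [Finset.sum_const, Finset.card_univ, Fintype.card_fin, nsmul_eq_mul]
          field_simp
        have hgm := Real.geom_mean_le_arith_mean_weighted Finset.univ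
          (fun _ => (1:ℝ)/((n+1:ℕ) : ℝ)) x (fun _ _ => by positivity) hw
          (fun p _ => hxnn p)
        rw [← Finset.mul_sum] at hgm
        calc (((n+1:ℕ)) : ℝ) * ∏ p, (x p) ^ ((1:ℝ)/((n+1:ℕ) : ℝ))
            ≤ (((n+1:ℕ)) : ℝ) * ((1:ℝ)/((n+1:ℕ) : ℝ) * ∑ p, x p) :=
              mul_le_mul_of_nonneg_left hgm (by positivity)
          _ = ∑ p, x p := by field_simp
      -- computing the product of the x p ^ (1/m)
      have hxsplit : ∀ p, (x p) ^ ((1:ℝ)/((n+1:ℕ) : ℝ))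
          = ((n.factorial : ℝ)) ^ ((1:ℝ)/((n+1:ℕ) : ℝ)) *
            ∏ j, ((Rm p j).det.re) ^ (((1:ℝ)/n) * ((1:ℝ)/((n+1:ℕ) : ℝ))) := by
        intro p
        rw [hx]
        rw [Real.mul_rpow (Nat.cast_nonneg _) (Finset.prod_nonneg fun j _ =>
          Real.rpow_nonneg (psd_det_real (hRmpsd p j)).2 _)]
        congr 1
        rw [← Real.finset_prod_rpow _ _ (fun j _ =>
          Real.rpow_nonneg (psd_det_real (hRmpsd p j)).2 _)]
        refine Finset.prod_congr rfl fun j _ => ?_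
        rw [← Real.rpow_mul (psd_det_real (hRmpsd p j)).2]
      have hfact_pow : (((n.factorial : ℝ)) ^ ((1:ℝ)/((n+1:ℕ) : ℝ))) ^ ((n+1 : ℕ))
          = (n.factorial : ℝ) := by
        rw [← Real.rpow_natCast (((n.factorial : ℝ)) ^ ((1:ℝ)/((n+1:ℕ) : ℝ))) (n+1),
          ← Real.rpow_mul (Nat.cast_nonneg _), one_div, inv_mul_cancel₀ hmne,
          Real.rpow_one]
      -- the key pointwise bound coming from the minor inequality
      have hminor : ∀ j : Fin n,
          ((Q' j.succ).det.re) ^ ((1:ℝ)/((n+1:ℕ) : ℝ))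
            ≤ ∏ p, ((Rm p j).det.re) ^ (((1:ℝ)/n) * ((1:ℝ)/((n+1:ℕ) : ℝ))) := by
        intro j
        have hnne : ((n : ℕ) : ℝ) ≠ 0 := by
          have := j.pos
          positivity
        have hprodminor := prod_minor_ge (hQ'psd j.succ)
        have hq'nn : 0 ≤ (Q' j.succ).det.re := (psd_det_real (hQ'psd j.succ)).2
        calc ((Q' j.succ).det.re) ^ ((1:ℝ)/((n+1:ℕ) : ℝ))
            = (((Q' j.succ).det.re) ^ (n : ℕ)) ^ (((1:ℝ)/n) * ((1:ℝ)/((n+1:ℕ) : ℝ))) := by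
              rw [← Real.rpow_natCast ((Q' j.succ).det.re) n, ← Real.rpow_mul hq'nn]
              congr 1
              field_simp
          _ ≤ (∏ p, ((Rm p j).det.re)) ^ (((1:ℝ)/n) * ((1:ℝ)/((n+1:ℕ) : ℝ))) := by
              refine Real.rpow_le_rpow (pow_nonneg hq'nn _) hprodminor ?_
              positivity
          _ = ∏ p, ((Rm p j).det.re) ^ (((1:ℝ)/n) * ((1:ℝ)/((n+1:ℕ) : ℝ))) := by
              rw [Real.finset_prod_rpow _ _ (fun p _ => (psd_det_real (hRmpsd p j)).2) ]
      have hq'detnn : ∀ i, 0 ≤ (Q' i).det.re := fun i => (psd_det_real (hQ'psd i)).2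
      have hnorm : (((n+1).factorial : ℕ) : ℝ)
            * ∏ i, ((Q' i).det.re) ^ ((1:ℝ)/((n+1:ℕ) : ℝ))
          ≤ (Dsum (n+1) Q').re := by
        rw [hre']
        refine le_trans ?_ (le_trans hAMGM (Finset.sum_le_sum fun p _ => hIHx p))
        have hrhs : (((n+1:ℕ)) : ℝ) * ∏ p, (x p) ^ ((1:ℝ)/((n+1:ℕ) : ℝ))
            = (((n+1).factorial : ℕ) : ℝ) * ∏ j : Fin n, ∏ p : Fin (n+1),
                ((Rm p j).det.re) ^ (((1:ℝ)/n) * ((1:ℝ)/((n+1:ℕ) : ℝ))) := by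
          rw [Finset.prod_congr rfl fun p _ => hxsplit p, Finset.prod_mul_distrib,
            Finset.prod_const, Finset.card_univ, Fintype.card_fin, hfact_pow,
            Finset.prod_comm, Nat.factorial_succ]
          push_cast
          ring
        rw [hrhs]
        have hlhs : ∏ i, ((Q' i).det.re) ^ ((1:ℝ)/((n+1:ℕ) : ℝ))
            = ∏ j : Fin n, ((Q' j.succ).det.re) ^ ((1:ℝ)/((n+1:ℕ) : ℝ)) := by
          rw [Fin.prod_univ_succ, hQ'0]
          simp
        rw [hlhs]
        refine mul_le_mul_of_nonneg_left ?_ (Nat.cast_nonneg _)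
        exact Finset.prod_le_prod (fun j _ => Real.rpow_nonneg (hq'detnn j.succ) _)
          (fun j _ => hminor j)
      -- transfer the normalized inequality back to `Q`
      have hDQre : (Dsum (n+1) Q).re = Tre B := by rw [hDsumQ, Complex.ofReal_re]
      have hDQ're : (Dsum (n+1) Q').re = c * Tre B := by
        rw [hDsumQ', Complex.ofReal_re, hc]
      have hprodQ' : ∏ i, ((Q' i).det.re) ^ ((1:ℝ)/((n+1:ℕ) : ℝ))
          = c * ∏ i, ((Q i).det.re) ^ ((1:ℝ)/((n+1:ℕ) : ℝ)) := by
        rw [Finset.prod_congr rfl fun i _ => by rw [hdetQ' i]]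
        rw [Finset.prod_congr rfl fun i _ =>
          Real.mul_rpow hcpos.le (psd_det_real (hQ i)).2]
        rw [Finset.prod_mul_distrib, Finset.prod_const, Finset.card_univ, Fintype.card_fin]
        congr 1
        rw [← Real.rpow_natCast (c ^ ((1:ℝ)/((n+1:ℕ) : ℝ))) (n+1),
          ← Real.rpow_mul hcpos.le, one_div, inv_mul_cancel₀ hmne, Real.rpow_one]
      rw [hprodQ', hDQ're] at hnorm
      have hfinal : (((n+1).factorial : ℕ) : ℝ)
            * ∏ i, ((Q i).det.re) ^ ((1:ℝ)/((n+1:ℕ) : ℝ)) ≤ Tre B := by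
        refine le_of_mul_le_mul_left ?_ hcpos
        calc c * ((((n+1).factorial : ℕ) : ℝ)
              * ∏ i, ((Q i).det.re) ^ ((1:ℝ)/((n+1:ℕ) : ℝ)))
            = (((n+1).factorial : ℕ) : ℝ)
              * (c * ∏ i, ((Q i).det.re) ^ ((1:ℝ)/((n+1:ℕ) : ℝ))) := by ring
          _ ≤ c * Tre B := hnorm
      rw [show ((1:ℝ)/((n+1:ℕ) : ℝ)) = ((1:ℝ)/(((n:ℕ)+1 : ℕ) : ℝ)) by norm_num] at hfinal
      exact hDQre ▸ hfinal

end MixedDetAux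


/-- Mixed determinant inequality (the pointwise content of the paper's
Corollary): for Hermitian positive semidefinite matrices `Q₁, …, Qₙ`,
`(1/n!)·Re(Σ_σ det M_σ) ≥ Π_i (Re det Q_i)^{1/n}`, where the `k`-th column of
`M_σ` is the `k`-th column of `Q_{σ(k)}`. -/
theorem mixed_determinant_inequality (n : ℕ) (hn : 1 ≤ n)
    (Q : Fin n → Matrix (Fin n) (Fin n) ℂ) (hQ : ∀ i, (Q i).PosSemidef) :
    (1 / (n.factorial : ℝ)) *
        (∑ σ : Equiv.Perm (Fin n), (Matrix.of fun j k => Q (σ k) j k).det).re ≥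
      ∏ i : Fin n, ((Q i).det.re) ^ ((1 : ℝ) / n) := by
  have hcore := MixedDetAux.core n Q hQ
  rw [MixedDetAux.I1 Q]
  have hfpos : (0:ℝ) < (n.factorial : ℝ) := by exact_mod_cast n.factorial_pos
  rw [ge_iff_le]
  calc ∏ i : Fin n, ((Q i).det.re) ^ ((1 : ℝ) / n)
      = (1 / (n.factorial : ℝ)) *
        ((n.factorial : ℝ) * ∏ i : Fin n, ((Q i).det.re) ^ ((1 : ℝ) / n)) := by
        field_simp
    _ ≤ (1 / (n.factorial : ℝ)) * (MixedDetAux.Dsum n Q).re :=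
        mul_le_mul_of_nonneg_left hcore (by positivity)
end

section
/- Let n ≥ 1, let Ω ⊆ ℂⁿ be open, let φ : ℂⁿ → ℝ be twice continuously differentiable such that the complex Hessian Q_φ(z) is positive semidefinite for all z ∈ Ω, and let f : Ω → ℝ satisfy f ≥ 0. Then the following are equivalent: (a) Re(det Q_φ(z)) ≥ f(z) for all z ∈ Ω; (b) for every H ∈ ℋ and every z ∈ Ω, (1/n)·Re(tr(H·Q_φ(z))) ≥ f(z)^{1/n}. -/
open Matrix ComplexOrder

/-- The complex Hessian `(∂²φ/∂z_j∂z̄_k)(z)` of a real-valued function `φ` on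
`ℂⁿ`, expressed through the second real Fréchet derivative of `φ`. -/
noncomputable def complexHessian (n : ℕ) (φ : EuclideanSpace ℂ (Fin n) → ℝ)
    (z : EuclideanSpace ℂ (Fin n)) : Matrix (Fin n) (Fin n) ℂ :=
  Matrix.of fun j k =>
    (((iteratedFDeriv ℝ 2 φ z ![EuclideanSpace.single j 1, EuclideanSpace.single k 1]
        + iteratedFDeriv ℝ 2 φ z
            ![Complex.I • EuclideanSpace.single j 1,
              Complex.I • EuclideanSpace.single k 1]) / 4 : ℝ) : ℂ)
    + Complex.I *
      (((iteratedFDeriv ℝ 2 φ z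
            ![EuclideanSpace.single j 1, Complex.I • EuclideanSpace.single k 1]
        - iteratedFDeriv ℝ 2 φ z
            ![Complex.I • EuclideanSpace.single j 1,
              EuclideanSpace.single k 1]) / 4 : ℝ) : ℂ)

private lemma smul_posDef {m : ℕ} {M : Matrix (Fin m) (Fin m) ℂ} (hM : M.PosDef)
    {r : ℝ} (hr : 0 < r) : ((r : ℂ) • M).PosDef := by
  refine ⟨?_, fun x hx => ?_⟩
  · have : (((r : ℂ) • M)ᴴ) = (star (r:ℂ)) • Mᴴ := Matrix.conjTranspose_smul _ _
    rw [Matrix.IsHermitian, this, hM.1.eq, Complex.star_def, Complex.conj_ofReal]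
  · have h1 : (0:ℂ) < (r:ℂ) := by
      rw [Complex.lt_def]; simp [hr]
    simpa [← Finsupp.smul_sum, Finsupp.mul_sum, mul_assoc, mul_left_comm] using mul_pos h1 (hM.2 hx)

private lemma trace_eq_sum_eigenvalues' {m : ℕ} {B : Matrix (Fin m) (Fin m) ℂ}
    (hB : B.IsHermitian) : B.trace = ((∑ i, hB.eigenvalues i : ℝ) : ℂ) := by
  conv_lhs => rw [hB.spectral_theorem]
  rw [Unitary.conjStarAlgAut_apply, Matrix.trace_mul_cycle, Unitary.coe_star_mul_self, one_mul, Matrix.trace_diagonal]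
  push_cast
  rfl

private lemma trace_re_nonneg' {m : ℕ} {B : Matrix (Fin m) (Fin m) ℂ}
    (hB : B.PosSemidef) : 0 ≤ B.trace.re := by
  rw [trace_eq_sum_eigenvalues' hB.1, Complex.ofReal_re]
  exact Finset.sum_nonneg fun i _ => hB.eigenvalues_nonneg i

private lemma amgm' {m : ℕ} (hm : m ≠ 0) {B : Matrix (Fin m) (Fin m) ℂ}
    (hB : B.PosSemidef) :
    B.det.re ^ ((1:ℝ)/m) ≤ (1/(m:ℝ)) * B.trace.re := by
  have hm0 : (m:ℝ) ≠ 0 := Nat.cast_ne_zero.mpr hm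
  have hnn : ∀ i, 0 ≤ hB.1.eigenvalues i := hB.eigenvalues_nonneg
  have hdet : B.det.re = ∏ i, hB.1.eigenvalues i := by
    rw [hB.1.det_eq_prod_eigenvalues]
    norm_cast
  have htr : B.trace.re = ∑ i, hB.1.eigenvalues i := by
    rw [trace_eq_sum_eigenvalues' hB.1, Complex.ofReal_re]
  rw [hdet, htr, ← Real.finset_prod_rpow _ _ (fun i _ => hnn i)]
  have := Real.geom_mean_le_arith_mean_weighted Finset.univ (fun _ => (1:ℝ)/m)
    hB.1.eigenvalues (fun i _ => by positivity)
    (by simp [Finset.sum_const, Finset.card_univ]; field_simp) (fun i _ => hnn i)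
  calc (∏ i, hB.1.eigenvalues i ^ ((1:ℝ)/m)) ≤ ∑ i, ((1:ℝ)/m) * hB.1.eigenvalues i := this
    _ = (1/(m:ℝ)) * ∑ i, hB.1.eigenvalues i := by rw [Finset.mul_sum]

open scoped MatrixOrder in
private lemma pointwise_iff (n : ℕ) (hn : 1 ≤ n) (A : Matrix (Fin n) (Fin n) ℂ)
    (hA : A.PosSemidef) (c : ℝ) (hc : 0 ≤ c) :
    A.det.re ≥ c ↔ ∀ H : Matrix (Fin n) (Fin n) ℂ, H.PosDef → H.det = 1 →
      (1 / (n : ℝ)) * ((H * A).trace).re ≥ c ^ ((1:ℝ)/n) := by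
  have hn0 : (n:ℝ) ≠ 0 := Nat.cast_ne_zero.mpr (by omega)
  constructor
  · intro h H hH hdet
    set S := CFC.sqrt H with hSdef
    have hSps : S.PosSemidef := (CFC.sqrt_nonneg H).posSemidef
    have hSH : Sᴴ = S := hSps.1
    have hB : (S * A * S).PosSemidef := by
      have := hA.mul_mul_conjTranspose_same S
      rwa [hSH] at this
    have htr : (S * A * S).trace = (H * A).trace := by
      rw [Matrix.trace_mul_comm, ← Matrix.mul_assoc, CFC.sqrt_mul_sqrt_self H hH.posSemidef.nonneg]
    have h2 : S.det * S.det = 1 := by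
      rw [← Matrix.det_mul, CFC.sqrt_mul_sqrt_self H hH.posSemidef.nonneg, hdet]
    have hdetB : (S * A * S).det = A.det := by
      rw [Matrix.det_mul, Matrix.det_mul]
      linear_combination A.det * h2
    have hge := amgm' (by omega) hB
    rw [hdetB, htr] at hge
    calc c ^ ((1:ℝ)/n) ≤ A.det.re ^ ((1:ℝ)/n) :=
          Real.rpow_le_rpow hc h (by positivity)
      _ ≤ (1 / (n:ℝ)) * ((H * A).trace).re := hge
  · intro h
    have key : ∀ ε : ℝ, 0 < ε → c ≤ (A + (ε:ℂ) • 1).det.re := by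
      intro ε hε
      have hone : ((ε:ℂ) • (1 : Matrix (Fin n) (Fin n) ℂ)).PosDef :=
        smul_posDef Matrix.PosDef.one hε
      have hAε : (A + (ε:ℂ) • 1).PosDef := Matrix.PosDef.posSemidef_add hA hone
      set Aε := A + (ε:ℂ) • 1 with hAεdef
      have hd := hAε.det_pos
      have hrpos : 0 < Aε.det.re := (Complex.lt_def.mp hd).1
      have him : Aε.det.im = 0 := by
        have := (Complex.lt_def.mp hd).2
        simpa using this.symm
      set r := Aε.det.re with hrdef
      have hdet_eq : Aε.det = (r:ℂ) := by
        apply Complex.ext <;> simp [him, r]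
      have hdne : Aε.det ≠ 0 := ne_of_gt hd
      set s : ℝ := r ^ ((1:ℝ)/n) with hsdef
      have hs : 0 < s := Real.rpow_pos_of_pos hrpos _
      have hHpd : ((s:ℂ) • Aε⁻¹).PosDef := smul_posDef hAε.inv hs
      have hsn : ((s:ℂ))^n = (r:ℂ) := by
        rw [← Complex.ofReal_pow]
        congr 1
        rw [hsdef, ← Real.rpow_natCast (r ^ ((1:ℝ)/n)) n, ← Real.rpow_mul hrpos.le,
          one_div, inv_mul_cancel₀ hn0, Real.rpow_one]
      have hHdet : ((s:ℂ) • Aε⁻¹).det = 1 := by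
        rw [Matrix.det_smul, Matrix.det_nonsing_inv, hdet_eq, Fintype.card_fin, hsn, Ring.inverse_eq_inv']
        exact mul_inv_cancel₀ (by exact_mod_cast hrpos.ne')
      have hkey := h _ hHpd hHdet
      have hAinv : Aε⁻¹ * A = 1 - (ε:ℂ) • Aε⁻¹ := by
        have hA_eq : A = Aε - (ε:ℂ) • 1 := by rw [hAεdef, add_sub_cancel_right]
        rw [hA_eq, Matrix.mul_sub, Matrix.nonsing_inv_mul _ (isUnit_iff_ne_zero.mpr hdne),
          mul_smul_comm, mul_one]
      have htrc : (((s:ℂ) • Aε⁻¹) * A).trace = (s:ℂ) * ((n:ℂ) - (ε:ℂ) * Aε⁻¹.trace) := by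
        rw [Matrix.smul_mul, hAinv, Matrix.trace_smul, Matrix.trace_sub, Matrix.trace_one,
          Matrix.trace_smul, smul_eq_mul, smul_eq_mul, Fintype.card_fin]
      have hre : (((s:ℂ) • Aε⁻¹) * A).trace.re = s * ((n:ℝ) - ε * Aε⁻¹.trace.re) := by
        rw [htrc, Complex.re_ofReal_mul]
        congr 1
        rw [Complex.sub_re, Complex.re_ofReal_mul, Complex.natCast_re]
      have htnn : 0 ≤ Aε⁻¹.trace.re := trace_re_nonneg' hAε.inv.posSemidef
      have hle : (1/(n:ℝ)) * ((((s:ℂ) • Aε⁻¹) * A).trace).re ≤ s := by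
        rw [hre]
        have h1 : s * ((n:ℝ) - ε * Aε⁻¹.trace.re) ≤ s * n := by nlinarith [mul_nonneg hs.le (mul_nonneg hε.le htnn)]
        calc (1/(n:ℝ)) * (s * ((n:ℝ) - ε * Aε⁻¹.trace.re)) ≤ (1/(n:ℝ)) * (s * n) := by
              apply mul_le_mul_of_nonneg_left h1 (by positivity)
          _ = s := by field_simp
      have hcs : c ^ ((1:ℝ)/n) ≤ s := le_trans hkey hle
      calc c = (c ^ ((1:ℝ)/n)) ^ ((n:ℕ):ℝ) := by
            rw [← Real.rpow_mul hc, one_div, inv_mul_cancel₀ hn0, Real.rpow_one]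
        _ ≤ s ^ ((n:ℕ):ℝ) := Real.rpow_le_rpow (Real.rpow_nonneg hc _) hcs (Nat.cast_nonneg n)
        _ = r := by
            rw [hsdef, ← Real.rpow_mul hrpos.le, one_div, inv_mul_cancel₀ hn0, Real.rpow_one]
    have cont : ContinuousAt (fun ε : ℝ => (A + (ε:ℂ) • 1).det.re) 0 := by
      apply Continuous.continuousAt
      exact Complex.continuous_re.comp
        ((continuous_const.add (Complex.continuous_ofReal.smul continuous_const)).matrix_det)
    have hten : Filter.Tendsto (fun ε : ℝ => (A + (ε:ℂ) • 1).det.re)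
        (nhdsWithin 0 (Set.Ioi 0)) (nhds ((A + ((0:ℝ):ℂ) • 1).det.re)) :=
      cont.tendsto.mono_left nhdsWithin_le_nhds
    have hev : ∀ᶠ ε in nhdsWithin (0:ℝ) (Set.Ioi 0),
        c ≤ (A + ((ε:ℝ):ℂ) • 1).det.re :=
      eventually_nhdsWithin_of_forall (fun ε hε => key ε hε)
    have hfin := ge_of_tendsto hten hev
    simpa using hfin

/-- The smooth case of (i) ⇔ (iii) in the Main Theorem: for a `C²`
plurisubharmonic `φ` on an open set `Ω ⊆ ℂⁿ` and `f ≥ 0`, one has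
`det Q_φ ≥ f` on `Ω` iff `Δ_H φ ≥ f^{1/n}` on `Ω` for all `H ∈ ℋ`. -/
theorem det_hessian_ge_iff_forall_laplacian_ge (n : ℕ) (hn : 1 ≤ n)
    (Ω : Set (EuclideanSpace ℂ (Fin n))) (hΩ : IsOpen Ω)
    (φ : EuclideanSpace ℂ (Fin n) → ℝ) (hφ : ContDiff ℝ 2 φ)
    (hpsh : ∀ z ∈ Ω, (complexHessian n φ z).PosSemidef)
    (f : EuclideanSpace ℂ (Fin n) → ℝ) (hf : ∀ z ∈ Ω, 0 ≤ f z) :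
    (∀ z ∈ Ω, (complexHessian n φ z).det.re ≥ f z) ↔
      (∀ H : Matrix (Fin n) (Fin n) ℂ, H.PosDef → H.det = 1 → ∀ z ∈ Ω,
        (1 / (n : ℝ)) * ((H * complexHessian n φ z).trace).re
          ≥ (f z) ^ ((1 : ℝ) / n)) := by
  constructor
  · intro h H hH hdet z hz
    exact (pointwise_iff n hn _ (hpsh z hz) (f z) (hf z hz)).mp (h z hz) H hH hdet
  · intro h z hz
    exact (pointwise_iff n hn _ (hpsh z hz) (f z) (hf z hz)).mpr
      (fun H hH hdet => h H hH hdet z hz)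
end
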